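/- Let α = (α_{i,j}) be a feasible allocation, i.e. α_{i,j} ≥ 0 for all 1 ≤ i ≤ K, 1 ≤ j ≤ D and Σ_{i,j} α_{i,j} = 1. Then α is an optimal solution of the problem of maximizing min_{i ≠ b} G_i(α_b, α_i) over feasible allocations if and only if all coordinates α_{i,j} are strictly positive and the following three conditions hold: (Input Balance) α_{i,j}/(σ_{i,j} w_j) = α_{i,j'}/(σ_{i,j'} w_{j'}) for every i ≠ b and every 1 ≤ j < j' ≤ D; (Total Balance) (α_{b,j}/σ_{b,j})² = Σ_{i ≠ b} (α_{i,j}/σ_{i,j})² for every 1 ≤ j ≤ D; (Local Balance) G_i(α_b, α_i) = G_{i'}(α_b, α_{i'}) for all i ≠ i' with i, i' ≠ b. -/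

import Mathlib

open Finset

lemma key_id {s a x : ℝ} (ha : 0 < a) (hx : 0 < x) :
    s / x - 2 * (s / a) + s * x / a ^ 2 = s * (x - a) ^ 2 / (x * a ^ 2) := by
  field_simp; ring

lemma key_nonneg {s a x : ℝ} (hs : 0 < s) (ha : 0 < a) (hx : 0 < x) :
    0 ≤ s / x - 2 * (s / a) + s * x / a ^ 2 := by
  rw [key_id ha hx]; positivity

lemma key_eq {s a x : ℝ} (hs : 0 < s) (ha : 0 < a) (hx : 0 < x)
    (h0 : s / x - 2 * (s / a) + s * x / a ^ 2 = 0) : x = a := by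
  rw [key_id ha hx] at h0
  have hd : x * a ^ 2 ≠ 0 := by positivity
  rcases div_eq_zero_iff.mp h0 with h | h
  · rcases mul_eq_zero.mp h with h | h
    · exact absurd h hs.ne'
    · have := pow_eq_zero_iff (n := 2) (by norm_num) |>.mp h
      linarith [sub_eq_zero.mp this]
  · exact absurd h hd

lemma master {K D : ℕ} (b : Fin K)
    (σ : Fin K → Fin D → ℝ) (hσ : ∀ i j, 0 < σ i j)
    (w : Fin D → ℝ) (hw : ∀ j, 0 < w j)
    (k : Fin K → ℝ) (hk : ∀ i ∈ univ.erase b, 0 < k i)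
    (u : ℝ) (hu : 0 < u) (hu2 : u ^ 2 = ∑ i ∈ univ.erase b, (k i) ^ 2)
    (α α' : Fin K → Fin D → ℝ)
    (hαb : ∀ j, α b j = σ b j * w j * u)
    (hαi : ∀ i ∈ univ.erase b, ∀ j, α i j = k i * σ i j * w j)
    (hα1 : ∑ i, ∑ j, α i j = 1)
    (hα' : ∀ i j, 0 < α' i j) (hα'1 : ∑ i, ∑ j, α' i j = 1)
    (hH : ∀ i ∈ univ.erase b,
      (∑ j, σ b j ^ 2 * w j ^ 2 / α' b j) + (∑ j, σ i j ^ 2 * w j ^ 2 / α' i j)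
      ≤ (∑ j, σ b j ^ 2 * w j ^ 2 / α b j) + (∑ j, σ i j ^ 2 * w j ^ 2 / α i j)) :
    α' = α := by
  have hαpos : ∀ i j, 0 < α i j := by
    intro i j
    by_cases hi : i = b
    · subst hi; rw [hαb j]; have := hσ i j; have := hw j; positivity
    · rw [hαi i (mem_erase.mpr ⟨hi, mem_univ i⟩) j]
      have := hk i (mem_erase.mpr ⟨hi, mem_univ i⟩)
      have := hσ i j; have := hw j; positivity
  have hspos : ∀ i j, (0:ℝ) < σ i j ^ 2 * w j ^ 2 := by
    intro i j; have := hσ i j; have := hw j; positivity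
  -- expansion identities
  have hkey1 : ∀ i ∈ univ.erase b, ∀ j,
      k i ^ 2 * (σ i j ^ 2 * w j ^ 2 / α' i j - 2 * (σ i j ^ 2 * w j ^ 2 / α i j)
        + σ i j ^ 2 * w j ^ 2 * α' i j / (α i j) ^ 2)
      = k i ^ 2 * (σ i j ^ 2 * w j ^ 2 / α' i j) - 2 * α i j + α' i j := by
    intro i hi j
    have hki := hk i hi
    have h1 := hσ i j; have h2 := hw j; have h3 := hα' i j
    rw [hαi i hi j]
    field_simp
  have hkey2 : ∀ j,
      u ^ 2 * (σ b j ^ 2 * w j ^ 2 / α' b j - 2 * (σ b j ^ 2 * w j ^ 2 / α b j)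
        + σ b j ^ 2 * w j ^ 2 * α' b j / (α b j) ^ 2)
      = u ^ 2 * (σ b j ^ 2 * w j ^ 2 / α' b j) - 2 * α b j + α' b j := by
    intro j
    have h1 := hσ b j; have h2 := hw j; have h3 := hα' b j
    rw [hαb j]
    field_simp
  -- nonnegativity of slack terms
  have hE1 : ∀ i ∈ univ.erase b, ∀ j,
      0 ≤ k i ^ 2 * (σ i j ^ 2 * w j ^ 2 / α' i j) - 2 * α i j + α' i j := by
    intro i hi j
    rw [← hkey1 i hi j]
    exact mul_nonneg (sq_nonneg _) (key_nonneg (hspos i j) (hαpos i j) (hα' i j))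
  have hE2 : ∀ j, 0 ≤ u ^ 2 * (σ b j ^ 2 * w j ^ 2 / α' b j) - 2 * α b j + α' b j := by
    intro j
    rw [← hkey2 j]
    exact mul_nonneg (sq_nonneg _) (key_nonneg (hspos b j) (hαpos b j) (hα' b j))
  -- decomposition of totals
  have hsum1 : (∑ i ∈ univ.erase b, ∑ j, α i j) + ∑ j, α b j = 1 := by
    rw [Finset.sum_erase_add univ _ (mem_univ b)]; exact hα1
  have hsum1' : (∑ i ∈ univ.erase b, ∑ j, α' i j) + ∑ j, α' b j = 1 := by
    rw [Finset.sum_erase_add univ _ (mem_univ b)]; exact hα'1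
  -- weighted H inequality
  have hXY : ∑ i ∈ univ.erase b, k i ^ 2 *
        ((∑ j, σ b j ^ 2 * w j ^ 2 / α' b j) + (∑ j, σ i j ^ 2 * w j ^ 2 / α' i j))
      ≤ ∑ i ∈ univ.erase b, k i ^ 2 *
        ((∑ j, σ b j ^ 2 * w j ^ 2 / α b j) + (∑ j, σ i j ^ 2 * w j ^ 2 / α i j)) :=
    Finset.sum_le_sum fun i hi => mul_le_mul_of_nonneg_left (hH i hi) (sq_nonneg _)
  -- compute RHS = 1
  have hbj : ∀ j, u ^ 2 * (σ b j ^ 2 * w j ^ 2 / α b j) = α b j := by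
    intro j
    have h1 := hσ b j; have h2 := hw j
    rw [hαb j]; field_simp
  have hij : ∀ i ∈ univ.erase b, ∀ j, k i ^ 2 * (σ i j ^ 2 * w j ^ 2 / α i j) = α i j := by
    intro i hi j
    have hki := hk i hi
    have h1 := hσ i j; have h2 := hw j
    rw [hαi i hi j]; field_simp
  have hY : ∑ i ∈ univ.erase b, k i ^ 2 *
        ((∑ j, σ b j ^ 2 * w j ^ 2 / α b j) + (∑ j, σ i j ^ 2 * w j ^ 2 / α i j)) = 1 := by
    have step : ∀ i ∈ univ.erase b, k i ^ 2 *
        ((∑ j, σ b j ^ 2 * w j ^ 2 / α b j) + (∑ j, σ i j ^ 2 * w j ^ 2 / α i j))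
        = k i ^ 2 * (∑ j, σ b j ^ 2 * w j ^ 2 / α b j) + ∑ j, α i j := by
      intro i hi
      rw [mul_add]
      congr 1
      rw [Finset.mul_sum]
      exact Finset.sum_congr rfl fun j _ => hij i hi j
    rw [Finset.sum_congr rfl step, Finset.sum_add_distrib, ← Finset.sum_mul, ← hu2,
      Finset.mul_sum]
    have step2 : ∀ j ∈ (univ : Finset (Fin D)),
        u ^ 2 * (σ b j ^ 2 * w j ^ 2 / α b j) = α b j := fun j _ => hbj j
    rw [Finset.sum_congr rfl step2]
    linarith [hsum1]
  -- compute LHS weighted form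
  have hX : ∑ i ∈ univ.erase b, k i ^ 2 *
        ((∑ j, σ b j ^ 2 * w j ^ 2 / α' b j) + (∑ j, σ i j ^ 2 * w j ^ 2 / α' i j))
      = (∑ j, u ^ 2 * (σ b j ^ 2 * w j ^ 2 / α' b j))
        + ∑ i ∈ univ.erase b, ∑ j, k i ^ 2 * (σ i j ^ 2 * w j ^ 2 / α' i j) := by
    have step : ∀ i ∈ univ.erase b, k i ^ 2 *
        ((∑ j, σ b j ^ 2 * w j ^ 2 / α' b j) + (∑ j, σ i j ^ 2 * w j ^ 2 / α' i j))
        = k i ^ 2 * (∑ j, σ b j ^ 2 * w j ^ 2 / α' b j)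
          + ∑ j, k i ^ 2 * (σ i j ^ 2 * w j ^ 2 / α' i j) := by
      intro i hi
      simp [mul_add, Finset.mul_sum]
    rw [Finset.sum_congr rfl step, Finset.sum_add_distrib, ← Finset.sum_mul, ← hu2,
      Finset.mul_sum]
  -- sum of slack terms is ≤ 0
  have sum3 : ∀ {ι : Type} (s : Finset ι) (f g h : ι → ℝ),
      ∑ x ∈ s, (f x - 2 * g x + h x)
        = (∑ x ∈ s, f x) - 2 * (∑ x ∈ s, g x) + ∑ x ∈ s, h x := by
    intro ι s f g h
    rw [Finset.sum_add_distrib, Finset.sum_sub_distrib, Finset.mul_sum]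
  have hP : ∑ i ∈ univ.erase b, ∑ j, (k i ^ 2 * (σ i j ^ 2 * w j ^ 2 / α' i j)
        - 2 * α i j + α' i j)
      = (∑ i ∈ univ.erase b, ∑ j, k i ^ 2 * (σ i j ^ 2 * w j ^ 2 / α' i j))
        - 2 * (∑ i ∈ univ.erase b, ∑ j, α i j) + ∑ i ∈ univ.erase b, ∑ j, α' i j := by
    have step : ∀ i ∈ univ.erase b, ∑ j, (k i ^ 2 * (σ i j ^ 2 * w j ^ 2 / α' i j)
        - 2 * α i j + α' i j)
        = (∑ j, k i ^ 2 * (σ i j ^ 2 * w j ^ 2 / α' i j)) - 2 * (∑ j, α i j)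
          + ∑ j, α' i j := by
      intro i hi
      exact sum3 univ _ _ _
    rw [Finset.sum_congr rfl step]
    exact sum3 _ _ _ _
  have hQ : ∑ j, (u ^ 2 * (σ b j ^ 2 * w j ^ 2 / α' b j) - 2 * α b j + α' b j)
      = (∑ j, u ^ 2 * (σ b j ^ 2 * w j ^ 2 / α' b j)) - 2 * (∑ j, α b j)
        + ∑ j, α' b j := sum3 _ _ _ _
  have hPQ : (∑ i ∈ univ.erase b, ∑ j, (k i ^ 2 * (σ i j ^ 2 * w j ^ 2 / α' i j)
        - 2 * α i j + α' i j))
      + (∑ j, (u ^ 2 * (σ b j ^ 2 * w j ^ 2 / α' b j) - 2 * α b j + α' b j)) ≤ 0 := by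
    rw [hP, hQ]
    have := hXY
    rw [hX, hY] at this
    linarith [hsum1, hsum1']
  -- each slack term is zero
  have hPzero : ∀ i ∈ univ.erase b, ∀ j,
      k i ^ 2 * (σ i j ^ 2 * w j ^ 2 / α' i j) - 2 * α i j + α' i j = 0 := by
    have h1 : (0:ℝ) ≤ ∑ i ∈ univ.erase b, ∑ j, (k i ^ 2 * (σ i j ^ 2 * w j ^ 2 / α' i j)
        - 2 * α i j + α' i j) :=
      Finset.sum_nonneg fun i hi => Finset.sum_nonneg fun j _ => hE1 i hi j
    have h2 : (0:ℝ) ≤ ∑ j, (u ^ 2 * (σ b j ^ 2 * w j ^ 2 / α' b j) - 2 * α b j + α' b j) :=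
      Finset.sum_nonneg fun j _ => hE2 j
    have h3 : ∑ i ∈ univ.erase b, ∑ j, (k i ^ 2 * (σ i j ^ 2 * w j ^ 2 / α' i j)
        - 2 * α i j + α' i j) = 0 := le_antisymm (by linarith) h1
    intro i hi j
    have h4 := (Finset.sum_eq_zero_iff_of_nonneg
      (fun i hi => Finset.sum_nonneg fun j _ => hE1 i hi j)).mp h3 i hi
    exact (Finset.sum_eq_zero_iff_of_nonneg (fun j _ => hE1 i hi j)).mp h4 j (mem_univ j)
  have hQzero : ∀ j,
      u ^ 2 * (σ b j ^ 2 * w j ^ 2 / α' b j) - 2 * α b j + α' b j = 0 := by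
    have h1 : (0:ℝ) ≤ ∑ i ∈ univ.erase b, ∑ j, (k i ^ 2 * (σ i j ^ 2 * w j ^ 2 / α' i j)
        - 2 * α i j + α' i j) :=
      Finset.sum_nonneg fun i hi => Finset.sum_nonneg fun j _ => hE1 i hi j
    have h2 : (0:ℝ) ≤ ∑ j, (u ^ 2 * (σ b j ^ 2 * w j ^ 2 / α' b j) - 2 * α b j + α' b j) :=
      Finset.sum_nonneg fun j _ => hE2 j
    have h3 : ∑ j, (u ^ 2 * (σ b j ^ 2 * w j ^ 2 / α' b j) - 2 * α b j + α' b j) = 0 :=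
      le_antisymm (by linarith) h2
    intro j
    exact (Finset.sum_eq_zero_iff_of_nonneg (fun j _ => hE2 j)).mp h3 j (mem_univ j)
  -- conclude coordinatewise equality
  funext i j
  by_cases hib : i = b
  · subst hib
    have h0 := hQzero j
    rw [← hkey2 j] at h0
    have hu2' : u ^ 2 ≠ 0 := by positivity
    have := (mul_eq_zero.mp h0).resolve_left hu2'
    exact key_eq (hspos i j) (hαpos i j) (hα' i j) this
  · have hi : i ∈ univ.erase b := mem_erase.mpr ⟨hib, mem_univ i⟩
    have h0 := hPzero i hi j
    rw [← hkey1 i hi j] at h0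
    have hki := hk i hi
    have hk2' : k i ^ 2 ≠ 0 := by positivity
    have := (mul_eq_zero.mp h0).resolve_left hk2'
    exact key_eq (hspos i j) (hαpos i j) (hα' i j) this

lemma exists_balance {K : ℕ} (b : Fin K) (hne : (univ.erase b).Nonempty)
    (d S : Fin K → ℝ) (hd : ∀ i ∈ univ.erase b, 0 < d i) (hS : ∀ i, 0 < S i) :
    ∃ (g : ℝ) (k_ : Fin K → ℝ), 0 < g ∧ (∀ i ∈ univ.erase b, 0 < k_ i) ∧
      (∑ i ∈ univ.erase b, k_ i ^ 2 = 1) ∧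
      (∀ i ∈ univ.erase b, S b + S i / k_ i = d i / g) := by
  obtain ⟨i₀, hi₀, hmin⟩ := Finset.exists_min_image (univ.erase b) d hne
  obtain ⟨iM, hiM, hmax⟩ := Finset.exists_max_image (univ.erase b) S hne
  set m := d i₀ with hm
  have hmpos : 0 < m := hd i₀ hi₀
  set Sm := S iM with hSm
  have hSmpos : 0 < Sm := hS iM
  have hSb : 0 < S b := hS b
  set n : ℝ := ((univ.erase b).card : ℝ) with hn
  have hn1 : 1 ≤ n := by
    have h2 : 1 ≤ (univ.erase b).card := Finset.card_pos.mpr hne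
    rw [hn]; exact_mod_cast h2
  have hn0 : 0 ≤ n := by linarith
  set g₂ := m / (S i₀ + S b) with hg₂
  set g₁ := m / (n * Sm + S b) with hg₁
  have hden₂ : 0 < S i₀ + S b := by linarith [hS i₀]
  have hden₁ : 0 < n * Sm + S b := by nlinarith
  have hg₂pos : 0 < g₂ := div_pos hmpos hden₂
  have hg₁pos : 0 < g₁ := div_pos hmpos hden₁
  have hg₁m : g₁ * (n * Sm + S b) = m := div_mul_cancel₀ m hden₁.ne'
  have hg₂m : g₂ * (S i₀ + S b) = m := div_mul_cancel₀ m hden₂.ne'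
  have hg12 : g₁ ≤ g₂ := by
    apply div_le_div_of_nonneg_left hmpos.le hden₂
    have h1 : S i₀ ≤ Sm := hmax i₀ hi₀
    nlinarith
  have hden : ∀ g ∈ Set.Icc g₁ g₂, ∀ i ∈ univ.erase b, 0 < d i - S b * g := by
    intro g hg i hi
    have h1 : m ≤ d i := hmin i hi
    have h2 : g ≤ g₂ := hg.2
    have h3 : 0 < S i₀ := hS i₀
    nlinarith
  set Ψ : ℝ → ℝ := fun g => ∑ i ∈ univ.erase b, (S i * g / (d i - S b * g)) ^ 2 with hΨ
  have hcont : ContinuousOn Ψ (Set.Icc g₁ g₂) := by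
    apply continuousOn_finset_sum
    intro i hi
    apply ContinuousOn.pow
    apply ContinuousOn.div
    · exact (continuousOn_const.mul continuousOn_id)
    · exact (continuousOn_const.sub (continuousOn_const.mul continuousOn_id))
    · intro g hg
      exact (hden g hg i hi).ne'
  have hΨ₁ : Ψ g₁ ≤ 1 := by
    have hterm : ∀ i ∈ univ.erase b, (S i * g₁ / (d i - S b * g₁)) ^ 2 ≤ (1 / n) ^ 2 := by
      intro i hi
      have hdi : 0 < d i - S b * g₁ :=
        hden g₁ (Set.left_mem_Icc.mpr hg12) i hi
      have hnum : 0 ≤ S i * g₁ := mul_nonneg (hS i).le hg₁pos.le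
      have hb : S i * g₁ / (d i - S b * g₁) ≤ 1 / n := by
        rw [div_le_div_iff₀ hdi (by linarith : (0:ℝ) < n)]
        have h1 : S i ≤ Sm := hmax i hi
        have h2 : m ≤ d i := hmin i hi
        nlinarith [mul_le_mul_of_nonneg_right h1 (mul_nonneg hn0 hg₁pos.le)]
      have : 0 ≤ S i * g₁ / (d i - S b * g₁) := div_nonneg hnum hdi.le
      exact pow_le_pow_left₀ this hb 2
    calc Ψ g₁ ≤ ∑ _i ∈ univ.erase b, (1 / n) ^ 2 := Finset.sum_le_sum hterm
      _ = n * (1 / n) ^ 2 := by rw [Finset.sum_const, nsmul_eq_mul, hn]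
      _ ≤ 1 := by
          have hnne : n ≠ 0 := by linarith
          have : n * (1 / n) ^ 2 = 1 / n := by field_simp
          rw [this]
          exact (div_le_one (by linarith)).mpr hn1
  have hΨ₂ : 1 ≤ Ψ g₂ := by
    have hterm : (S i₀ * g₂ / (d i₀ - S b * g₂)) ^ 2 = 1 := by
      have hdi : 0 < d i₀ - S b * g₂ :=
        hden g₂ (Set.right_mem_Icc.mpr hg12) i₀ hi₀
      have : S i₀ * g₂ / (d i₀ - S b * g₂) = 1 := by
        rw [div_eq_one_iff_eq hdi.ne']
        rw [← hm]
        nlinarith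
      rw [this]; norm_num
    calc (1:ℝ) = (S i₀ * g₂ / (d i₀ - S b * g₂)) ^ 2 := hterm.symm
      _ ≤ Ψ g₂ := by
          simp only [hΨ]
          exact Finset.single_le_sum (f := fun i => (S i * g₂ / (d i - S b * g₂)) ^ 2) (fun i _ => sq_nonneg _) hi₀
  have hIVT := intermediate_value_Icc hg12 hcont
  have h1mem : (1:ℝ) ∈ Set.Icc (Ψ g₁) (Ψ g₂) := ⟨hΨ₁, hΨ₂⟩
  obtain ⟨g, hgmem, hgeq⟩ := hIVT h1mem
  have hgpos : 0 < g := lt_of_lt_of_le hg₁pos hgmem.1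
  refine ⟨g, fun i => S i * g / (d i - S b * g), hgpos, ?_, hgeq, ?_⟩
  · intro i hi
    exact div_pos (mul_pos (hS i) hgpos) (hden g hgmem i hi)
  · intro i hi
    have hdi := hden g hgmem i hi
    have hSi := hS i
    field_simp
    ring

lemma sq_inj {x y : ℝ} (hx : 0 ≤ x) (hy : 0 ≤ y) (h : x ^ 2 = y ^ 2) : x = y := by
  have h1 : (x - y) * (x + y) = 0 := by linear_combination h
  rcases mul_eq_zero.mp h1 with h2 | h2
  · linarith [sub_eq_zero.mp h2]
  · have : x = 0 := by linarith
    have : y = 0 := by linarith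
    linarith

/-- Optimality conditions (Input Balance, Total Balance, Local Balance) characterize the
optimal budget allocation for the rate-maximization problem. -/
theorem stmt_0
    {K D : ℕ} (hK : 2 ≤ K) (hD : 1 ≤ D)
    (b : Fin K)
    (μ : Fin K → Fin D → ℝ)
    (σ : Fin K → Fin D → ℝ) (hσ : ∀ i j, 0 < σ i j)
    (w : Fin D → ℝ) (hw : ∀ j, 0 < w j) (hw1 : ∑ j, w j = 1)
    (μbar : Fin K → ℝ) (hμbar : ∀ i, μbar i = ∑ j, w j * μ i j)
    (hbest : ∀ i, i ≠ b → μbar i < μbar b)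
    (G : Fin K → (Fin K → Fin D → ℝ) → ℝ)
    (hGpos : ∀ i α, (∀ j, 0 < α b j) → (∀ j, 0 < α i j) →
      G i α = (μbar b - μbar i) ^ 2 /
        (2 * (∑ j, (σ b j) ^ 2 * (w j) ^ 2 / α b j
            + ∑ j, (σ i j) ^ 2 * (w j) ^ 2 / α i j)))
    (hGzero : ∀ i α, (∃ j, α b j = 0 ∨ α i j = 0) → G i α = 0)
    (α : Fin K → Fin D → ℝ)
    (hα0 : ∀ i j, 0 ≤ α i j) (hα1 : ∑ i, ∑ j, α i j = 1) :
    ((∀ α' : Fin K → Fin D → ℝ, (∀ i j, 0 ≤ α' i j) → ∑ i, ∑ j, α' i j = 1 →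
        (⨅ i : {i : Fin K // i ≠ b}, G i.1 α') ≤ ⨅ i : {i : Fin K // i ≠ b}, G i.1 α)
      ↔
      ((∀ i j, 0 < α i j) ∧
        (∀ i, i ≠ b → ∀ j j' : Fin D, j < j' →
          α i j / (σ i j * w j) = α i j' / (σ i j' * w j')) ∧
        (∀ j, (α b j / σ b j) ^ 2 = ∑ i ∈ univ.erase b, (α i j / σ i j) ^ 2) ∧
        (∀ i i' : Fin K, i ≠ b → i' ≠ b → i ≠ i' → G i α = G i' α))) := by
  -- common setup
  have hmeme : ∀ i : Fin K, i ≠ b → i ∈ univ.erase b :=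
    fun i h => mem_erase.mpr ⟨h, mem_univ i⟩
  have j₀ : Fin D := ⟨0, hD⟩
  haveI : Nontrivial (Fin K) := Fin.nontrivial_iff_two_le.mpr hK
  obtain ⟨i₁, hi₁⟩ := exists_ne b
  haveI hneI : Nonempty {i : Fin K // i ≠ b} := ⟨⟨i₁, hi₁⟩⟩
  have bdd : ∀ β : Fin K → Fin D → ℝ,
      BddBelow (Set.range fun i : {i : Fin K // i ≠ b} => G i.1 β) :=
    fun β => Set.Finite.bddBelow (Set.finite_range _)
  have hdpos : ∀ i, i ≠ b → 0 < (μbar b - μbar i) ^ 2 :=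
    fun i h => pow_pos (sub_pos.mpr (hbest i h)) 2
  have Dne : (univ : Finset (Fin D)).Nonempty := ⟨j₀, mem_univ _⟩
  have Hpos : ∀ (β : Fin K → Fin D → ℝ), (∀ i j, 0 < β i j) → ∀ i : Fin K,
      0 < (∑ j, (σ b j) ^ 2 * (w j) ^ 2 / β b j
          + ∑ j, (σ i j) ^ 2 * (w j) ^ 2 / β i j) := by
    intro β hβ i
    have h1 : 0 < ∑ j, (σ b j) ^ 2 * (w j) ^ 2 / β b j :=
      Finset.sum_pos (fun j _ => by
        have := hσ b j; have := hw j; have := hβ b j; positivity) Dne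
    have h2 : 0 < ∑ j, (σ i j) ^ 2 * (w j) ^ 2 / β i j :=
      Finset.sum_pos (fun j _ => by
        have := hσ i j; have := hw j; have := hβ i j; positivity) Dne
    linarith
  constructor
  · ------------------------------------------------------------------
    -- optimal → conditions
    intro hopt
    set S : Fin K → ℝ := fun i => ∑ j, σ i j * w j with hS
    have hSpos : ∀ i, 0 < S i :=
      fun i => Finset.sum_pos (fun j _ => mul_pos (hσ i j) (hw j)) Dne
    set d : Fin K → ℝ := fun i => (μbar b - μbar i) ^ 2 with hd
    have hne_e : (univ.erase b).Nonempty := ⟨i₁, hmeme i₁ hi₁⟩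
    obtain ⟨g, k, hg, hk, hk2, hbal⟩ := exists_balance b hne_e d S
      (fun i hi => hdpos i (mem_erase.mp hi).1) hSpos
    set αt : Fin K → Fin D → ℝ :=
      fun i j => if i = b then σ i j * w j else k i * σ i j * w j with hαt
    have hαtpos : ∀ i j, 0 < αt i j := by
      intro i j
      by_cases hib : i = b
      · simp only [hαt, if_pos hib]
        exact mul_pos (hσ i j) (hw j)
      · simp only [hαt, if_neg hib]
        exact mul_pos (mul_pos (hk i (hmeme i hib)) (hσ i j)) (hw j)
    set T : ℝ := ∑ i, ∑ j, αt i j with hT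
    have hTpos : 0 < T :=
      Finset.sum_pos (fun i _ => Finset.sum_pos (fun j _ => hαtpos i j) Dne)
        ⟨b, mem_univ b⟩
    set αs : Fin K → Fin D → ℝ := fun i j => αt i j / T with hαsdef
    set ks : Fin K → ℝ := fun i => k i / T with hks
    set us : ℝ := 1 / T with hus
    have hkspos : ∀ i ∈ univ.erase b, 0 < ks i :=
      fun i hi => div_pos (hk i hi) hTpos
    have huspos : 0 < us := div_pos one_pos hTpos
    have hus2 : us ^ 2 = ∑ i ∈ univ.erase b, ks i ^ 2 := by
      simp only [hus, hks, div_pow, one_pow, ← Finset.sum_div, hk2]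
    have hαsb : ∀ j, αs b j = σ b j * w j * us := by
      intro j
      simp only [hαsdef, hαt, hus, eq_self_iff_true, if_true]
      ring
    have hαsi : ∀ i ∈ univ.erase b, ∀ j, αs i j = ks i * σ i j * w j := by
      intro i hi j
      simp only [hαsdef, hαt, hks, if_neg (mem_erase.mp hi).1]
      ring
    have hαspos : ∀ i j, 0 < αs i j := fun i j => div_pos (hαtpos i j) hTpos
    have hαs1 : ∑ i, ∑ j, αs i j = 1 := by
      simp only [hαsdef, ← Finset.sum_div]
      exact div_self hTpos.ne'
    -- value of the H-functional at αs
    have hHs : ∀ i ∈ univ.erase b,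
        (∑ j, (σ b j) ^ 2 * (w j) ^ 2 / αs b j
          + ∑ j, (σ i j) ^ 2 * (w j) ^ 2 / αs i j) = T * (d i / g) := by
      intro i hi
      have h1 : ∀ j, (σ b j) ^ 2 * (w j) ^ 2 / αs b j = T * (σ b j * w j) := by
        intro j
        rw [hαsb j]
        have := hσ b j; have := hw j
        simp only [hus]
        field_simp
      have h2 : ∀ j, (σ i j) ^ 2 * (w j) ^ 2 / αs i j = T * (σ i j * w j) / k i := by
        intro j
        rw [hαsi i hi j]
        have := hσ i j; have := hw j; have := hk i hi
        simp only [hks]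
        field_simp
      rw [Finset.sum_congr rfl fun j _ => h1 j, Finset.sum_congr rfl fun j _ => h2 j]
      have e1 : ∑ j, T * (σ b j * w j) = T * S b := by rw [Finset.mul_sum]
      have e2 : ∑ j, T * (σ i j * w j) / k i = T * (S i / k i) := by
        rw [← Finset.sum_div, ← Finset.mul_sum, mul_div_assoc]
      rw [e1, e2, ← mul_add, hbal i hi]
    -- value of G at αs
    have hGsval : ∀ i, i ≠ b → G i αs = g / (2 * T) := by
      intro i hi
      rw [hGpos i αs (fun j => hαspos b j) (fun j => hαspos i j), hHs i (hmeme i hi)]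
      have hdi : 0 < d i := hdpos i hi
      have : (μbar b - μbar i) ^ 2 = d i := rfl
      rw [this]
      field_simp
    have hinf_s : (⨅ i : {i : Fin K // i ≠ b}, G i.1 αs) = g / (2 * T) := by
      apply le_antisymm
      · exact le_of_le_of_eq (ciInf_le (bdd αs) ⟨i₁, hi₁⟩) (hGsval i₁ hi₁)
      · exact le_ciInf fun i => (hGsval i.1 i.2).ge
    have hgs : 0 < g / (2 * T) := by positivity
    have hle : g / (2 * T) ≤ ⨅ i : {i : Fin K // i ≠ b}, G i.1 α := by
      rw [← hinf_s]
      exact hopt αs (fun i j => (hαspos i j).le) hαs1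
    -- positivity of α
    have hpos : ∀ i j, 0 < α i j := by
      intro i j
      rcases (hα0 i j).lt_or_eq with h | h
      · exact h
      · exfalso
        have hzero : ∃ i₂, ∃ _ : i₂ ≠ b, G i₂ α = 0 := by
          by_cases hib : i = b
          · exact ⟨i₁, hi₁, hGzero i₁ α ⟨j, Or.inl (hib ▸ h.symm)⟩⟩
          · exact ⟨i, hib, hGzero i α ⟨j, Or.inr h.symm⟩⟩
        obtain ⟨i₂, hi₂, hGz⟩ := hzero
        have h1 : (⨅ i : {i : Fin K // i ≠ b}, G i.1 α) ≤ 0 :=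
          le_of_le_of_eq (ciInf_le (bdd α) ⟨i₂, hi₂⟩) hGz
        linarith
    -- H-comparison
    have hHcomp : ∀ i ∈ univ.erase b,
        (∑ j, (σ b j) ^ 2 * (w j) ^ 2 / α b j)
          + (∑ j, (σ i j) ^ 2 * (w j) ^ 2 / α i j)
        ≤ (∑ j, (σ b j) ^ 2 * (w j) ^ 2 / αs b j)
          + (∑ j, (σ i j) ^ 2 * (w j) ^ 2 / αs i j) := by
      intro i hi
      have hi' : i ≠ b := (mem_erase.mp hi).1
      have h1 : g / (2 * T) ≤ G i α :=
        le_trans hle (ciInf_le (bdd α) ⟨i, hi'⟩)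
      rw [hGpos i α (fun j => hpos b j) (fun j => hpos i j)] at h1
      have h2 : g / (2 * T) = G i αs := (hGsval i hi').symm
      rw [hGpos i αs (fun j => hαspos b j) (fun j => hαspos i j)] at h2
      rw [h2] at h1
      have hXα := Hpos α hpos i
      have hXs := Hpos αs hαspos i
      have hdi := hdpos i hi'
      rw [div_le_div_iff₀ (by linarith) (by linarith)] at h1
      nlinarith
    have heq : α = αs :=
      master b σ hσ w hw ks hkspos us huspos hus2 αs α hαsb hαsi hαs1 hpos hα1 hHcomp
    refine ⟨hpos, ?_, ?_, ?_⟩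
    · -- input balance
      intro i hib j j' hjj'
      rw [heq, hαsi i (hmeme i hib) j, hαsi i (hmeme i hib) j']
      have h1 : σ i j * w j ≠ 0 := (mul_pos (hσ i j) (hw j)).ne'
      have h2 : σ i j' * w j' ≠ 0 := (mul_pos (hσ i j') (hw j')).ne'
      field_simp
      have := (hσ i j).ne'; have := (hσ i j').ne'; have := (hw j).ne'; have := (hw j').ne'
      field_simp
    · -- total balance
      intro j
      rw [heq, hαsb j]
      have step : ∀ i ∈ univ.erase b, (αs i j / σ i j) ^ 2 = ks i ^ 2 * (w j) ^ 2 := by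
        intro i hi
        rw [hαsi i hi j]
        have := hσ i j
        field_simp
      rw [Finset.sum_congr rfl step, ← Finset.sum_mul, ← hus2]
      have := hσ b j
      field_simp
    · -- local balance
      intro i i' hi hi' _
      rw [heq, hGsval i hi, hGsval i' hi']
  · ------------------------------------------------------------------
    -- conditions → optimal
    rintro ⟨hpos, hin, htot, hloc⟩ α' hα'0 hα'1
    -- derive parametric form of α
    set k : Fin K → ℝ := fun i => α i j₀ / (σ i j₀ * w j₀) with hkdef
    have hkpos : ∀ i ∈ univ.erase b, 0 < k i :=
      fun i _ => div_pos (hpos i j₀) (mul_pos (hσ i j₀) (hw j₀))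
    have hratio : ∀ i, i ≠ b → ∀ j j' : Fin D,
        α i j / (σ i j * w j) = α i j' / (σ i j' * w j') := by
      intro i hi j j'
      rcases lt_trichotomy j j' with h | h | h
      · exact hin i hi j j' h
      · rw [h]
      · exact (hin i hi j' j h).symm
    have hαi : ∀ i ∈ univ.erase b, ∀ j, α i j = k i * σ i j * w j := by
      intro i hi j
      have h := hratio i (mem_erase.mp hi).1 j j₀
      have hne : σ i j * w j ≠ 0 := (mul_pos (hσ i j) (hw j)).ne'
      have h2 : α i j = k i * (σ i j * w j) := by
        simp only [hkdef]
        rw [← h, div_mul_cancel₀ _ hne]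
      rw [h2]; ring
    set u : ℝ := α b j₀ / (σ b j₀ * w j₀) with hudef
    have hupos : 0 < u := div_pos (hpos b j₀) (mul_pos (hσ b j₀) (hw j₀))
    have hsq : ∀ i ∈ univ.erase b, ∀ j,
        (α i j / σ i j) ^ 2 = k i ^ 2 * (w j) ^ 2 := by
      intro i hi j
      rw [hαi i hi j]
      have := hσ i j
      field_simp
    have hlb : (α b j₀ / σ b j₀) ^ 2 = u ^ 2 * (w j₀) ^ 2 := by
      simp only [hudef]
      have := hσ b j₀; have := hw j₀
      field_simp
    have hu2 : u ^ 2 = ∑ i ∈ univ.erase b, k i ^ 2 := by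
      have ht := htot j₀
      rw [Finset.sum_congr rfl (fun i hi => hsq i hi j₀), ← Finset.sum_mul, hlb] at ht
      have hwne : (w j₀) ^ 2 ≠ 0 := by have := hw j₀; positivity
      exact mul_right_cancel₀ hwne ht
    have hαb : ∀ j, α b j = σ b j * w j * u := by
      intro j
      have ht := htot j
      rw [Finset.sum_congr rfl (fun i hi => hsq i hi j), ← Finset.sum_mul, ← hu2] at ht
      have h1 : α b j / σ b j = w j * u := by
        apply sq_inj (div_nonneg (hα0 b j) (hσ b j).le)
          (mul_nonneg (hw j).le hupos.le)
        rw [ht]; ring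
      have h2 : α b j = σ b j * (w j * u) := by
        rw [← h1, mul_div_cancel₀ _ (hσ b j).ne']
      rw [h2]; ring
    -- the common value of G at α
    have hgall : ∀ i, i ≠ b → G i α = G i₁ α := by
      intro i hi
      by_cases h : i = i₁
      · rw [h]
      · exact hloc i i₁ hi hi₁ h
    have hgpos : 0 < G i₁ α := by
      rw [hGpos i₁ α (fun j => hpos b j) (fun j => hpos i₁ j)]
      have := Hpos α hpos i₁
      have := hdpos i₁ hi₁
      positivity
    have hinf_α : (⨅ i : {i : Fin K // i ≠ b}, G i.1 α) = G i₁ α := by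
      apply le_antisymm
      · exact ciInf_le (bdd α) ⟨i₁, hi₁⟩
      · exact le_ciInf fun i => (hgall i.1 i.2).ge
    rw [hinf_α]
    by_cases hz : ∀ i j, 0 < α' i j
    · by_contra hlt
      push_neg at hlt
      have hgt : ∀ i, i ≠ b → G i₁ α < G i α' :=
        fun i hi => lt_of_lt_of_le hlt (ciInf_le (bdd α') ⟨i, hi⟩)
      have hHcomp : ∀ i ∈ univ.erase b,
          (∑ j, (σ b j) ^ 2 * (w j) ^ 2 / α' b j)
            + (∑ j, (σ i j) ^ 2 * (w j) ^ 2 / α' i j)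
          ≤ (∑ j, (σ b j) ^ 2 * (w j) ^ 2 / α b j)
            + (∑ j, (σ i j) ^ 2 * (w j) ^ 2 / α i j) := by
        intro i hi
        have hi' : i ≠ b := (mem_erase.mp hi).1
        have h1 := hgt i hi'
        rw [← hgall i hi'] at h1
        rw [hGpos i α (fun j => hpos b j) (fun j => hpos i j),
          hGpos i α' (fun j => hz b j) (fun j => hz i j)] at h1
        have hXα := Hpos α hpos i
        have hXα' := Hpos α' hz i
        have hdi := hdpos i hi'
        rw [div_lt_div_iff₀ (by linarith) (by linarith)] at h1
        nlinarith
      have heq : α' = α :=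
        master b σ hσ w hw k hkpos u hupos hu2 α α' hαb hαi hα1 hz hα'1 hHcomp
      have := hgt i₁ hi₁
      rw [heq, ← hgall i₁ hi₁] at this
      exact lt_irrefl _ this
    · push_neg at hz
      obtain ⟨i, j, hij⟩ := hz
      have hz0 : α' i j = 0 := le_antisymm hij (hα'0 i j)
      by_cases hib : i = b
      · have h0 : G i₁ α' = 0 := hGzero i₁ α' ⟨j, Or.inl (hib ▸ hz0)⟩
        calc (⨅ i : {i : Fin K // i ≠ b}, G i.1 α') ≤ G i₁ α' :=
              ciInf_le (bdd α') ⟨i₁, hi₁⟩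
          _ = 0 := h0
          _ ≤ G i₁ α := hgpos.le
      · have h0 : G i α' = 0 := hGzero i α' ⟨j, Or.inr hz0⟩
        calc (⨅ i : {i : Fin K // i ≠ b}, G i.1 α') ≤ G i α' :=
              ciInf_le (bdd α') ⟨i, hib⟩
          _ = 0 := h0
          _ ≤ G i₁ α := hgpos.le
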